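/- For 0 < δ < 1, a > 0, and |t| < a(1-δ), define δ(τ) = (1/2)(1 + δ - |τ|/a) for 0 ≤ τ ≤ |t|. Then δ < δ(τ) < 1 for all 0 ≤ τ ≤ |t|, and the integral estimate ∫₀^{|t|} 1/((δ(τ) - δ) sqrt(1 - τ/(a(1-δ(τ))))) dτ ≤ (8a/(1-δ)) sqrt(a(1-δ)/(a(1-δ) - |t|)) holds. -/

import Mathlib

/-- Scalar core of the Ovsyannikov integral estimate: with `δ(τ) = (1/2)(1 + δ - τ/a)`, one has
`δ < δ(τ) < 1` on `[0, |t|]` and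
`∫₀^{|t|} dτ / ((δ(τ)-δ)√(1 - τ/(a(1-δ(τ))))) ≤ (8a/(1-δ)) √(a(1-δ)/(a(1-δ)-|t|))`. -/
theorem stmt16 (a δ : ℝ) (ha : 0 < a) (hδ0 : 0 < δ) (hδ1 : δ < 1)
    (t : ℂ) (ht : ‖t‖ < a * (1 - δ)) :
    (∀ τ : ℝ, 0 ≤ τ → τ ≤ ‖t‖ →
      δ < (1/2) * (1 + δ - τ / a) ∧ (1/2) * (1 + δ - τ / a) < 1) ∧
    (∫ τ in (0 : ℝ)..(‖t‖),
        1 / (((1/2) * (1 + δ - τ / a) - δ) *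
          Real.sqrt (1 - τ / (a * (1 - (1/2) * (1 + δ - τ / a))))) ≤
      8 * a / (1 - δ) *
        Real.sqrt (a * (1 - δ) / (a * (1 - δ) - ‖t‖))) := by
  set T := ‖t‖ with hTdef
  have hT0 : 0 ≤ T := norm_nonneg t
  set b := a * (1 - δ) with hbdef
  have hδ1' : 0 < 1 - δ := by linarith
  have hb : 0 < b := mul_pos ha hδ1'
  have hTb : T < b := ht
  constructor
  · intro τ hτ0 hτT
    have h1 : τ / a < 1 - δ := (div_lt_iff₀ ha).mpr (by nlinarith)
    have h2 : 0 ≤ τ / a := div_nonneg hτ0 ha.le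
    constructor <;> linarith
  -- pointwise simplification of the integrand on [0, T]
  have heq : ∀ τ ∈ Set.Icc (0:ℝ) T,
      1 / (((1/2) * (1 + δ - τ / a) - δ) *
        Real.sqrt (1 - τ / (a * (1 - (1/2) * (1 + δ - τ / a)))))
      = 2 * a * Real.sqrt (b + τ) / ((b - τ) * Real.sqrt (b - τ)) := by
    intro τ hτ
    have hbm : 0 < b - τ := by linarith [hτ.2]
    have hbp : 0 < b + τ := by linarith [hτ.1]
    have e1 : (1/2) * (1 + δ - τ / a) - δ = (b - τ) / (2 * a) := by
      rw [hbdef]; field_simp; ring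
    have e2 : a * (1 - (1/2) * (1 + δ - τ / a)) = (b + τ) / 2 := by
      rw [hbdef]; field_simp; ring
    have e3 : 1 - τ / ((b + τ) / 2) = (b - τ) / (b + τ) := by
      field_simp
      ring
    rw [e1, e2, e3, Real.sqrt_div hbm.le]
    rw [div_mul_div_comm, one_div_div]
  -- continuity / integrability facts
  have hcontg : ContinuousOn (fun τ => 2 * a * Real.sqrt (b + τ) / ((b - τ) * Real.sqrt (b - τ)))
      (Set.Icc (0:ℝ) T) := by
    apply ContinuousOn.div
    · fun_prop
    · fun_prop
    · intro τ hτ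
      have hbm : 0 < b - τ := by linarith [hτ.2]
      exact (mul_pos hbm (Real.sqrt_pos.mpr hbm)).ne'
  have hcontf : ContinuousOn (fun τ =>
      1 / (((1/2) * (1 + δ - τ / a) - δ) *
        Real.sqrt (1 - τ / (a * (1 - (1/2) * (1 + δ - τ / a)))))) (Set.Icc (0:ℝ) T) :=
    hcontg.congr heq
  have hcontg2 : ContinuousOn (fun τ => 2 * a * Real.sqrt (2 * b) / ((b - τ) * Real.sqrt (b - τ)))
      (Set.Icc (0:ℝ) T) := by
    apply ContinuousOn.div
    · fun_prop
    · fun_prop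
    · intro τ hτ
      have hbm : 0 < b - τ := by linarith [hτ.2]
      exact (mul_pos hbm (Real.sqrt_pos.mpr hbm)).ne'
  have hIf : IntervalIntegrable (fun τ =>
      1 / (((1/2) * (1 + δ - τ / a) - δ) *
        Real.sqrt (1 - τ / (a * (1 - (1/2) * (1 + δ - τ / a)))))) MeasureTheory.volume 0 T := by
    apply ContinuousOn.intervalIntegrable
    rwa [Set.uIcc_of_le hT0]
  have hIg : IntervalIntegrable (fun τ => 2 * a * Real.sqrt (2 * b) / ((b - τ) * Real.sqrt (b - τ)))
      MeasureTheory.volume 0 T := by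
    apply ContinuousOn.intervalIntegrable
    rwa [Set.uIcc_of_le hT0]
  -- pointwise bound
  have hle : ∀ τ ∈ Set.Icc (0:ℝ) T,
      1 / (((1/2) * (1 + δ - τ / a) - δ) *
        Real.sqrt (1 - τ / (a * (1 - (1/2) * (1 + δ - τ / a)))))
      ≤ 2 * a * Real.sqrt (2 * b) / ((b - τ) * Real.sqrt (b - τ)) := by
    intro τ hτ
    rw [heq τ hτ]
    have hbm : 0 < b - τ := by linarith [hτ.2]
    have hd : 0 < (b - τ) * Real.sqrt (b - τ) := mul_pos hbm (Real.sqrt_pos.mpr hbm)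
    gcongr
    linarith [hτ.2]
  have hmono := intervalIntegral.integral_mono_on hT0 hIf hIg hle
  -- compute the majorant integral
  have hderiv : ∀ x ∈ Set.uIcc (0:ℝ) T, HasDerivAt (fun τ => 2 / Real.sqrt (b - τ))
      (1 / ((b - x) * Real.sqrt (b - x))) x := by
    intro x hx
    rw [Set.uIcc_of_le hT0] at hx
    have hbx : 0 < b - x := by linarith [hx.2]
    have hs : 0 < Real.sqrt (b - x) := Real.sqrt_pos.mpr hbx
    have h1 : HasDerivAt (fun τ : ℝ => b - τ) (-1) x := by
      simpa using (hasDerivAt_id x).const_sub b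
    have h2 : HasDerivAt (fun τ => Real.sqrt (b - τ)) (1 / (2 * Real.sqrt (b - x)) * (-1)) x :=
      (Real.hasDerivAt_sqrt hbx.ne').comp x h1
    have h3 : HasDerivAt (fun τ => 2 / Real.sqrt (b - τ))
        ((0 * Real.sqrt (b - x) - 2 * (1 / (2 * Real.sqrt (b - x)) * -1)) / Real.sqrt (b - x) ^ 2) x :=
      (hasDerivAt_const x (2:ℝ)).div h2 hs.ne'
    convert h3 using 1
    rw [Real.sq_sqrt hbx.le]
    field_simp
    ring
  have hIder : IntervalIntegrable (fun x => 1 / ((b - x) * Real.sqrt (b - x)))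
      MeasureTheory.volume 0 T := by
    apply ContinuousOn.intervalIntegrable
    rw [Set.uIcc_of_le hT0]
    apply ContinuousOn.div
    · fun_prop
    · fun_prop
    · intro τ hτ
      have hbm : 0 < b - τ := by linarith [hτ.2]
      exact (mul_pos hbm (Real.sqrt_pos.mpr hbm)).ne'
  have hcomp : (∫ τ in (0:ℝ)..T, 1 / ((b - τ) * Real.sqrt (b - τ)))
      = 2 / Real.sqrt (b - T) - 2 / Real.sqrt (b - 0) :=
    intervalIntegral.integral_eq_sub_of_hasDerivAt hderiv hIder
  have hconst : (∫ τ in (0:ℝ)..T, 2 * a * Real.sqrt (2 * b) / ((b - τ) * Real.sqrt (b - τ)))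
      = 2 * a * Real.sqrt (2 * b) * (2 / Real.sqrt (b - T) - 2 / Real.sqrt (b - 0)) := by
    rw [← hcomp, ← intervalIntegral.integral_const_mul]
    congr 1
    ext τ
    rw [mul_one_div]
  -- final arithmetic
  have hs : 0 < Real.sqrt (b - T) := Real.sqrt_pos.mpr (by linarith)
  have hsb : 0 < Real.sqrt b := Real.sqrt_pos.mpr hb
  have h2b : Real.sqrt (2 * b) = Real.sqrt 2 * Real.sqrt b := Real.sqrt_mul (by norm_num) b
  have hsqrt2 : Real.sqrt 2 ≤ 2 := by
    nlinarith [Real.sq_sqrt (show (0:ℝ) ≤ 2 by norm_num), Real.sqrt_nonneg 2]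
  have hdivq : Real.sqrt (b / (b - T)) = Real.sqrt b / Real.sqrt (b - T) :=
    Real.sqrt_div hb.le _
  have hfinal : 2 * a * Real.sqrt (2 * b) * (2 / Real.sqrt (b - T) - 2 / Real.sqrt (b - 0))
      ≤ 8 * a / (1 - δ) * Real.sqrt (b / (b - T)) := by
    rw [hdivq, h2b, sub_zero]
    have step1 : 2 * a * (Real.sqrt 2 * Real.sqrt b) * (2 / Real.sqrt (b - T) - 2 / Real.sqrt b)
        ≤ 2 * a * (Real.sqrt 2 * Real.sqrt b) * (2 / Real.sqrt (b - T)) := by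
      apply mul_le_mul_of_nonneg_left _ (by positivity)
      have : 0 ≤ 2 / Real.sqrt b := by positivity
      linarith
    have step2 : 2 * a * (Real.sqrt 2 * Real.sqrt b) * (2 / Real.sqrt (b - T))
        ≤ 8 * a * (Real.sqrt b / Real.sqrt (b - T)) := by
      calc 2 * a * (Real.sqrt 2 * Real.sqrt b) * (2 / Real.sqrt (b - T))
          = (4 * Real.sqrt 2) * (a * (Real.sqrt b / Real.sqrt (b - T))) := by ring
        _ ≤ 8 * (a * (Real.sqrt b / Real.sqrt (b - T))) := by
            apply mul_le_mul_of_nonneg_right (by linarith) (by positivity)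
        _ = 8 * a * (Real.sqrt b / Real.sqrt (b - T)) := by ring
    have step3 : 8 * a * (Real.sqrt b / Real.sqrt (b - T))
        ≤ 8 * a / (1 - δ) * (Real.sqrt b / Real.sqrt (b - T)) := by
      apply mul_le_mul_of_nonneg_right _ (by positivity)
      rw [le_div_iff₀ hδ1']
      nlinarith
    linarith
  calc (∫ τ in (0:ℝ)..T,
        1 / (((1/2) * (1 + δ - τ / a) - δ) *
          Real.sqrt (1 - τ / (a * (1 - (1/2) * (1 + δ - τ / a))))))
      ≤ ∫ τ in (0:ℝ)..T, 2 * a * Real.sqrt (2 * b) / ((b - τ) * Real.sqrt (b - τ)) := hmono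
    _ = 2 * a * Real.sqrt (2 * b) * (2 / Real.sqrt (b - T) - 2 / Real.sqrt (b - 0)) := hconst
    _ ≤ 8 * a / (1 - δ) * Real.sqrt (b / (b - T)) := hfinal
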